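/- arXiv:1103.4048 — 2 statements merged into one kernel-verified Lean document; each statement's English description precedes it below -/
import Mathlib

section
/- The rational function F(w¹,w²,w³,w⁴) = w¹((w¹)²/12 + w²w⁴/6 + (w³)²/12) + w³(w⁴)³/648 + (w²)²w³/(2w⁴) − w²(w³)³/(3(w⁴)²) + (w³)⁵/(10(w⁴)³) satisfies the WDVV associativity equations on the domain {w⁴ ≠ 0} ⊂ ℝ⁴ with constant metric η given by η₁₁ = 1/2, η₂₄ = η₄₂ = 1/6, η₃₃ = 1/6 and all other entries zero: for all α,β one has ∂₁∂_α∂_β F = η_{αβ}, the matrix η is invertible, and the structure constants c^γ_{αβ} = Σ_ε (η⁻¹)^{γε} ∂_ε∂_α∂_β F satisfy Σ_ε c^ε_{αβ} c^σ_{εγ} = Σ_ε c^ε_{αγ} c^σ_{εβ} for all α,β,γ,σ at every point with w⁴ ≠ 0. -/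
/-- Partial derivative of `f : (Fin N → ℝ) → ℝ` in the `i`-th coordinate direction. -/
noncomputable def pd {N : ℕ} (i : Fin N) (f : (Fin N → ℝ) → ℝ) : (Fin N → ℝ) → ℝ :=
  fun x => fderiv ℝ f x (Pi.single i 1)

/-- The potential. -/
noncomputable def FF : (Fin 4 → ℝ) → ℝ :=
  fun w => w 0 * ((w 0) ^ 2 / 12 + w 1 * w 3 / 6 + (w 2) ^ 2 / 12) + w 2 * (w 3) ^ 3 / 648 + (w 1) ^ 2 * w 2 / (2 * w 3) - w 1 * (w 2) ^ 3 / (3 * (w 3) ^ 2) + (w 2) ^ 5 / (10 * (w 3) ^ 3)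

/-- The constant metric. -/
noncomputable def eta : Matrix (Fin 4) (Fin 4) ℝ :=
  !![1/2, 0, 0, 0; 0, 0, 0, 1/6; 0, 0, 1/6, 0; 0, 1/6, 0, 0]

/-- Third partial derivatives `c_(αβγ) = ∂_α ∂_β ∂_γ F`. -/
noncomputable def c3 (α β γ : Fin 4) (x : Fin 4 → ℝ) : ℝ :=
  pd α (pd β (pd γ FF)) x

/-- Structure constants `c^γ_(αβ) = Σ_ε (η⁻¹)^(γε) c_(εαβ)`. -/
noncomputable def cUp (γ α β : Fin 4) (x : Fin 4 → ℝ) : ℝ :=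
  ∑ ε, eta⁻¹ γ ε * c3 ε α β x

/-- kernel-computable rational coefficients -/
abbrev Q := ℤ × ℕ+

noncomputable def evQ (q : Q) : ℝ := (q.1 : ℝ) / ((q.2 : ℕ) : ℝ)

def qadd (a b : Q) : Q := (a.1 * ((b.2 : ℕ) : ℤ) + b.1 * ((a.2 : ℕ) : ℤ), a.2 * b.2)

def qmul (a b : Q) : Q := (a.1 * b.1, a.2 * b.2)

lemma pnat_cast_ne (n : ℕ+) : ((n : ℕ) : ℝ) ≠ 0 := by
  exact_mod_cast n.pos.ne'

lemma evQ_qadd (a b : Q) : evQ (qadd a b) = evQ a + evQ b := by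
  have ha := pnat_cast_ne a.2
  have hb := pnat_cast_ne b.2
  simp only [evQ, qadd]
  push_cast
  field_simp

lemma evQ_qmul (a b : Q) : evQ (qmul a b) = evQ a * evQ b := by
  simp only [evQ, qmul]
  push_cast
  ring

inductive E : Type
  | X : Fin 4 → E
  | C : Q → E
  | zero : E
  | one : E
  | add : E → E → E
  | mul : E → E → E
  | inv3 : E
  deriving DecidableEq

noncomputable def ev : E → (Fin 4 → ℝ) → ℝ
  | E.X j, x => x j
  | E.C q, _ => evQ q
  | E.zero, _ => 0
  | E.one, _ => 1
  | E.add a b, x => ev a x + ev b x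
  | E.mul a b, x => ev a x * ev b x
  | E.inv3, x => (x 3)⁻¹

def mkAdd : E → E → E
  | E.zero, b => b
  | a, E.zero => a
  | a, b => E.add a b

def mkMul : E → E → E
  | E.zero, _ => E.zero
  | _, E.zero => E.zero
  | E.one, b => b
  | a, E.one => a
  | a, b => E.mul a b

lemma ev_mkAdd (a b : E) (x : Fin 4 → ℝ) : ev (mkAdd a b) x = ev a x + ev b x := by
  cases a <;> cases b <;> simp [mkAdd, ev]

lemma ev_mkMul (a b : E) (x : Fin 4 → ℝ) : ev (mkMul a b) x = ev a x * ev b x := by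
  cases a <;> cases b <;> simp [mkMul, ev]

def D (i : Fin 4) : E → E
  | E.X j => if i = j then E.one else E.zero
  | E.C _ => E.zero
  | E.zero => E.zero
  | E.one => E.zero
  | E.add a b => mkAdd (D i a) (D i b)
  | E.mul a b => mkAdd (mkMul (D i a) b) (mkMul a (D i b))
  | E.inv3 => if i = 3 then E.mul (E.C (-1, 1)) (E.mul E.inv3 E.inv3) else E.zero

lemma E.hasDeriv (e : E) (x : Fin 4 → ℝ) (hx : x 3 ≠ 0) :
    ∃ L : (Fin 4 → ℝ) →L[ℝ] ℝ, HasFDerivAt (ev e) L x ∧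
      ∀ i, L (Pi.single i 1) = ev (D i e) x := by
  induction e with
  | X j =>
      refine ⟨ContinuousLinearMap.proj j, hasFDerivAt_apply j x, fun i => ?_⟩
      by_cases h : i = j <;> simp [ev, D, h, Pi.single_apply]
  | C q => exact ⟨0, hasFDerivAt_const _ _, fun i => by simp [ev, D]⟩
  | zero => exact ⟨0, hasFDerivAt_const _ _, fun i => by simp [ev, D]⟩
  | one => exact ⟨0, hasFDerivAt_const _ _, fun i => by simp [ev, D]⟩
  | add a b iha ihb =>
      obtain ⟨La, ha, hea⟩ := iha
      obtain ⟨Lb, hb, heb⟩ := ihb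
      exact ⟨La + Lb, ha.add hb, fun i => by simp [ev, D, ev_mkAdd, hea i, heb i]⟩
  | mul a b iha ihb =>
      obtain ⟨La, ha, hea⟩ := iha
      obtain ⟨Lb, hb, heb⟩ := ihb
      refine ⟨ev a x • Lb + ev b x • La, ha.mul hb, fun i => ?_⟩
      simp [ev, D, ev_mkAdd, ev_mkMul, hea i, heb i]
      ring
  | inv3 =>
      refine ⟨((-ContinuousLinearMap.mulLeftRight ℝ ℝ (x 3)⁻¹ (x 3)⁻¹).comp
          (ContinuousLinearMap.proj 3)), ?_, fun i => ?_⟩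
      · exact (hasFDerivAt_inv' hx).comp x (hasFDerivAt_apply 3 x)
      by_cases h : i = 3
      · subst h
        simp [ev, D, evQ, Pi.single_apply, sq, mul_inv]
      · simp [ev, D, h, Pi.single_apply, Ne.symm h]

lemma pd_ev (e : E) (i : Fin 4) (x : Fin 4 → ℝ) (hx : x 3 ≠ 0) :
    pd i (ev e) x = ev (D i e) x := by
  obtain ⟨L, hL, hE⟩ := e.hasDeriv x hx
  show fderiv ℝ (ev e) x (Pi.single i 1) = _
  rw [hL.fderiv]
  exact hE i

lemma nhds_ne (x : Fin 4 → ℝ) (hx : x 3 ≠ 0) : ∀ᶠ y in nhds x, y 3 ≠ 0 :=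
  (continuous_apply 3).continuousAt.eventually_ne hx

lemma pd_congr (i : Fin 4) {f g : (Fin 4 → ℝ) → ℝ} {x : Fin 4 → ℝ}
    (h : f =ᶠ[nhds x] g) : pd i f x = pd i g x := by
  show fderiv ℝ f x (Pi.single i 1) = fderiv ℝ g x (Pi.single i 1)
  rw [h.fderiv_eq]

abbrev Mn := ℕ × ℕ × ℕ × ℕ × ℕ

abbrev Pl := List (Q × Mn)

noncomputable def evMon (m : Mn) (x : Fin 4 → ℝ) : ℝ :=
  x 0 ^ m.1 * x 1 ^ m.2.1 * x 2 ^ m.2.2.1 * x 3 ^ m.2.2.2.1 * ((x 3)⁻¹) ^ m.2.2.2.2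

noncomputable def evP (p : Pl) (x : Fin 4 → ℝ) : ℝ :=
  (p.map (fun t => evQ t.1 * evMon t.2 x)).sum

def addM (m1 m2 : Mn) : Mn :=
  (m1.1 + m2.1, m1.2.1 + m2.2.1, m1.2.2.1 + m2.2.2.1, m1.2.2.2.1 + m2.2.2.2.1,
   m1.2.2.2.2 + m2.2.2.2.2)

def insertP (q : Q) (m : Mn) : Pl → Pl
  | [] => [(q, m)]
  | (q', m') :: p => if m = m' then (qadd q q', m') :: p else (q', m') :: insertP q m p

def addP : Pl → Pl → Pl
  | [], p => p
  | (q, m) :: r, p => insertP q m (addP r p)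

def smulP (q : Q) (m : Mn) (p : Pl) : Pl :=
  p.map fun t => (qmul q t.1, addM m t.2)

def mulP : Pl → Pl → Pl
  | [], _ => []
  | (q, m) :: r, p => addP (smulP q m p) (mulP r p)

def monX : Fin 4 → Mn := ![(1,0,0,0,0), (0,1,0,0,0), (0,0,1,0,0), (0,0,0,1,0)]

def normE : E → Pl
  | E.X j => [((1,1), monX j)]
  | E.C q => [(q, (0,0,0,0,0))]
  | E.zero => []
  | E.one => [((1,1), (0,0,0,0,0))]
  | E.add a b => addP (normE a) (normE b)
  | E.mul a b => mulP (normE a) (normE b)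
  | E.inv3 => [((1,1), (0,0,0,0,1))]

lemma evMon_addM (m1 m2 : Mn) (x : Fin 4 → ℝ) :
    evMon (addM m1 m2) x = evMon m1 x * evMon m2 x := by
  simp [evMon, addM, pow_add]
  ring

lemma evP_insertP (q : Q) (m : Mn) (p : Pl) (x : Fin 4 → ℝ) :
    evP (insertP q m p) x = evQ q * evMon m x + evP p x := by
  induction p with
  | nil => simp [insertP, evP]
  | cons t p ih =>
      obtain ⟨q', m'⟩ := t
      by_cases h : m = m'
      · subst h
        simp [insertP, evP, evQ_qadd]
        ring
      · simp [insertP, h, evP] at ih ⊢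
        rw [ih]
        ring

lemma evP_addP (p r : Pl) (x : Fin 4 → ℝ) :
    evP (addP p r) x = evP p x + evP r x := by
  induction p with
  | nil => simp [addP, evP]
  | cons t p ih =>
      obtain ⟨q, m⟩ := t
      simp only [addP]
      rw [evP_insertP, ih]
      simp [evP]
      ring

lemma evP_smulP (q : Q) (m : Mn) (p : Pl) (x : Fin 4 → ℝ) :
    evP (smulP q m p) x = evQ q * evMon m x * evP p x := by
  induction p with
  | nil => simp [smulP, evP]
  | cons t p ih =>
      obtain ⟨q', m'⟩ := t
      simp [smulP, evP, evMon_addM, evQ_qmul] at ih ⊢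
      rw [ih]
      ring

lemma evP_mulP (p r : Pl) (x : Fin 4 → ℝ) :
    evP (mulP p r) x = evP p x * evP r x := by
  induction p with
  | nil => simp [mulP, evP]
  | cons t p ih =>
      obtain ⟨q, m⟩ := t
      simp only [mulP]
      rw [evP_addP, evP_smulP, ih]
      simp [evP]
      ring

lemma ev_normE (e : E) (x : Fin 4 → ℝ) : ev e x = evP (normE e) x := by
  induction e with
  | X j => fin_cases j <;> simp [normE, evP, evMon, ev, monX, evQ]
  | C q => simp [normE, evP, evMon, ev]
  | zero => simp [normE, evP, ev]
  | one => simp [normE, evP, evMon, ev, evQ]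
  | add a b iha ihb => simp [normE, evP_addP, ev, iha, ihb]
  | mul a b iha ihb => simp [normE, evP_mulP, ev, iha, ihb]
  | inv3 => simp [normE, evP, evMon, ev, evQ]

open E in
def eFF : E :=
  add (mul (X 0) (add (mul (C (1,12)) (mul (X 0) (X 0)))
        (add (mul (C (1,6)) (mul (X 1) (X 3))) (mul (C (1,12)) (mul (X 2) (X 2))))))
  (add (mul (C (1,648)) (mul (X 2) (mul (X 3) (mul (X 3) (X 3)))))
  (add (mul (C (1,2)) (mul (mul (X 1) (X 1)) (mul (X 2) inv3)))
  (add (mul (C (-1,3)) (mul (X 1) (mul (mul (X 2) (mul (X 2) (X 2))) (mul inv3 inv3))))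
  (mul (C (1,10)) (mul (X 2) (mul (X 2) (mul (X 2) (mul (X 2) (mul (X 2) (mul inv3 (mul inv3 inv3)))))))))))

lemma FF_eq : FF = ev eFF := by
  funext x
  norm_num [FF, ev, eFF, evQ, PNat.val_ofNat]
  ring

lemma c3_eq (x : Fin 4 → ℝ) (hx : x 3 ≠ 0) (α β γ : Fin 4) :
    c3 α β γ x = ev (D α (D β (D γ eFF))) x := by
  have h1 : ∀ y : Fin 4 → ℝ, y 3 ≠ 0 → pd γ FF y = ev (D γ eFF) y := fun y hy => by
    rw [FF_eq]; exact pd_ev _ _ _ hy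
  have h2 : ∀ y : Fin 4 → ℝ, y 3 ≠ 0 → pd β (pd γ FF) y = ev (D β (D γ eFF)) y := by
    intro y hy
    rw [pd_congr β ((nhds_ne y hy).mono fun z hz => h1 z hz), pd_ev _ _ _ hy]
  show pd α (pd β (pd γ FF)) x = _
  rw [pd_congr α ((nhds_ne x hx).mono fun z hz => h2 z hz), pd_ev _ _ _ hx]
def pTab : Fin 4 → Fin 4 → Fin 4 → Pl :=
  ![![![[((864,1728), (0,0,0,0,0))],
      [],
      [],
      []],
    ![[],
      [],
      [],
      [((1,6), (0,0,0,0,0))]],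
    ![[],
      [],
      [((2,12), (0,0,0,0,0))],
      []],
    ![[],
      [((1,6), (0,0,0,0,0))],
      [],
      []]],
   ![![[],
      [],
      [],
      [((1,6), (0,0,0,0,0))]],
    ![[],
      [],
      [((2,2), (0,0,0,0,1))],
      [((-2,2), (0,0,1,0,2))]],
    ![[],
      [((2,2), (0,0,0,0,1))],
      [((-6,3), (0,0,1,0,2))],
      [((6,3), (0,0,2,0,3)), ((-2,2), (0,1,0,0,2))]],
    ![[((1,6), (0,0,0,0,0))],
      [((-2,2), (0,0,1,0,2))],
      [((6,3), (0,0,2,0,3)), ((-2,2), (0,1,0,0,2))],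
      [((-6,3), (0,0,3,0,4)), ((4,2), (0,1,1,0,3))]]],
   ![![[],
      [],
      [((2,12), (0,0,0,0,0))],
      []],
    ![[],
      [((2,2), (0,0,0,0,1))],
      [((-6,3), (0,0,1,0,2))],
      [((6,3), (0,0,2,0,3)), ((-2,2), (0,1,0,0,2))]],
    ![[((2,12), (0,0,0,0,0))],
      [((-6,3), (0,0,1,0,2))],
      [((60,10), (0,0,2,0,3)), ((-6,3), (0,1,0,0,2))],
      [((-60,10), (0,0,3,0,4)), ((12,3), (0,1,1,0,3))]],
    ![[],
      [((6,3), (0,0,2,0,3)), ((-2,2), (0,1,0,0,2))],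
      [((-60,10), (0,0,3,0,4)), ((12,3), (0,1,1,0,3))],
      [((60,10), (0,0,4,0,5)), ((-18,3), (0,1,2,0,4)), ((2,2), (0,2,0,0,3)), ((6,648), (0,0,0,1,0))]]],
   ![![[],
      [((1,6), (0,0,0,0,0))],
      [],
      []],
    ![[((1,6), (0,0,0,0,0))],
      [((-2,2), (0,0,1,0,2))],
      [((6,3), (0,0,2,0,3)), ((-2,2), (0,1,0,0,2))],
      [((-6,3), (0,0,3,0,4)), ((4,2), (0,1,1,0,3))]],
    ![[],
      [((6,3), (0,0,2,0,3)), ((-2,2), (0,1,0,0,2))],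
      [((-60,10), (0,0,3,0,4)), ((12,3), (0,1,1,0,3))],
      [((60,10), (0,0,4,0,5)), ((-18,3), (0,1,2,0,4)), ((2,2), (0,2,0,0,3)), ((6,648), (0,0,0,1,0))]],
    ![[],
      [((-6,3), (0,0,3,0,4)), ((4,2), (0,1,1,0,3))],
      [((60,10), (0,0,4,0,5)), ((-18,3), (0,1,2,0,4)), ((2,2), (0,2,0,0,3)), ((6,648), (0,0,0,1,0))],
      [((-60,10), (0,0,5,0,6)), ((24,3), (0,1,3,0,5)), ((-6,2), (0,2,1,0,4)), ((6,648), (0,0,1,0,0))]]]]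

lemma pTab_eq : ∀ a b c : Fin 4, normE (D a (D b (D c eFF))) = pTab a b c := by
  intro a b c
  fin_cases a <;> fin_cases b <;> fin_cases c <;> decide

lemma c3_poly (x : Fin 4 → ℝ) (hx : x 3 ≠ 0) (α β γ : Fin 4) :
    c3 α β γ x = evP (pTab α β γ) x := by
  rw [c3_eq x hx, ev_normE, pTab_eq]

lemma eta_inv : eta⁻¹ = !![2, 0, 0, 0; 0, 0, 0, 6; 0, 0, 6, 0; 0, 6, 0, 0] := by
  rw [Matrix.inv_eq_right_inv]
  ext i j
  fin_cases i <;> fin_cases j <;>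
    norm_num [eta, Matrix.mul_apply, Fin.sum_univ_four, Matrix.one_apply, Matrix.cons_val',
      Matrix.cons_val_zero, Matrix.cons_val_one, Matrix.head_cons, Matrix.empty_val',
      Matrix.cons_val_fin_one, Matrix.head_fin_const, Matrix.vecHead, Matrix.vecTail,
      Matrix.cons_val_succ, Fin.ext_iff, Matrix.cons_val_two, Matrix.cons_val_three]

def redM (m : Mn) : Mn :=
  (m.1, m.2.1, m.2.2.1, m.2.2.2.1 - min m.2.2.2.1 m.2.2.2.2,
   m.2.2.2.2 - min m.2.2.2.1 m.2.2.2.2)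

lemma evMon_redM (x : Fin 4 → ℝ) (hx : x 3 ≠ 0) (m : Mn) :
    evMon (redM m) x = evMon m x := by
  obtain ⟨a, b, c, d, e⟩ := m
  simp only [redM, evMon]
  have key : (x 3) ^ (d - min d e) * ((x 3)⁻¹) ^ (e - min d e)
      = (x 3) ^ d * ((x 3)⁻¹) ^ e := by
    rcases Nat.le_total d e with h | h
    · rw [min_eq_left h, Nat.sub_self, pow_zero, one_mul]
      conv_rhs => rw [show e = d + (e - d) by omega, pow_add, ← mul_assoc, ← mul_pow,
        mul_inv_cancel₀ hx, one_pow, one_mul]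
    · rw [min_eq_right h, Nat.sub_self, pow_zero, mul_one]
      conv_rhs => rw [show d = (d - e) + e by omega, pow_add, mul_assoc, ← mul_pow,
        mul_inv_cancel₀ hx, one_pow, mul_one]
  simp only [mul_assoc]
  rw [key]

def collectP : Pl → Pl
  | [] => []
  | t :: p => insertP t.1 (redM t.2) (collectP p)

lemma evP_collectP (x : Fin 4 → ℝ) (hx : x 3 ≠ 0) (p : Pl) :
    evP (collectP p) x = evP p x := by
  induction p with
  | nil => rfl
  | cons t p ih =>
      rw [collectP, evP_insertP, evMon_redM x hx, ih]
      simp [evP]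

def isZero (p : Pl) : Bool := p.all fun t => t.1.1 == 0

lemma evP_isZero (p : Pl) (h : isZero p = true) (x : Fin 4 → ℝ) : evP p x = 0 := by
  induction p with
  | nil => rfl
  | cons t p ih =>
      rw [isZero, List.all_cons, Bool.and_eq_true] at h
      have h1 : t.1.1 = (0 : ℤ) := by exact_mod_cast beq_iff_eq.mp h.1
      have h2 := ih h.2
      simp [evP, evQ, h1] at h2 ⊢
      exact h2

def subP (p r : Pl) : Pl := addP p (smulP (-1, 1) (0,0,0,0,0) r)

lemma evP_subP (p r : Pl) (x : Fin 4 → ℝ) : evP (subP p r) x = evP p x - evP r x := by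
  rw [subP, evP_addP, evP_smulP]
  simp [evQ, evMon]
  ring

lemma evP_eq_of_sub (p r : Pl) (h : isZero (collectP (subP p r)) = true)
    (x : Fin 4 → ℝ) (hx : x 3 ≠ 0) : evP p x = evP r x := by
  have h0 := evP_isZero _ h x
  rw [evP_collectP x hx, evP_subP] at h0
  linarith

def coefV : Fin 4 → Q := ![(2,1), (6,1), (6,1), (6,1)]
def permV : Fin 4 → Fin 4 := ![0, 3, 2, 1]

def uT (γ α β : Fin 4) : Pl := smulP (coefV γ) (0,0,0,0,0) (pTab (permV γ) α β)

lemma cUp_eq (x : Fin 4 → ℝ) (hx : x 3 ≠ 0) (γ α β : Fin 4) :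
    cUp γ α β x = evP (uT γ α β) x := by
  fin_cases γ <;>
    norm_num [cUp, Fin.sum_univ_four, eta_inv, c3_poly x hx, uT, coefV, permV, evP_smulP,
      evQ, evMon, Matrix.cons_val', Matrix.cons_val_zero, Matrix.cons_val_one,
      Matrix.head_cons, Matrix.empty_val', Matrix.cons_val_fin_one, Matrix.head_fin_const,
      Matrix.vecHead, Matrix.vecTail, Matrix.cons_val_succ, Matrix.cons_val_two,
      Matrix.cons_val_three]

def lhsP (α β γ σ : Fin 4) : Pl :=
  addP (addP (addP (mulP (uT 0 α β) (uT σ 0 γ)) (mulP (uT 1 α β) (uT σ 1 γ)))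
    (mulP (uT 2 α β) (uT σ 2 γ))) (mulP (uT 3 α β) (uT σ 3 γ))

lemma evP_lhsP (x : Fin 4 → ℝ) (hx : x 3 ≠ 0) (α β γ σ : Fin 4) :
    ∑ ε, cUp ε α β x * cUp σ ε γ x = evP (lhsP α β γ σ) x := by
  rw [Fin.sum_univ_four]
  simp only [cUp_eq x hx, lhsP, evP_addP, evP_mulP]


theorem stmt_5 :
    (∀ (α β : Fin 4) (x : Fin 4 → ℝ), (_ : x 3 ≠ 0) → c3 0 α β x = eta α β) ∧
    IsUnit eta.det ∧
    (∀ (α β γ σ : Fin 4) (x : Fin 4 → ℝ), (_ : x 3 ≠ 0) → 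
      ∑ ε, cUp ε α β x * cUp σ ε γ x = ∑ ε, cUp ε α γ x * cUp σ ε β x) := by
  refine ⟨?_, ?_, ?_⟩
  · intro α β x hx
    rw [c3_poly x hx]
    fin_cases α <;> fin_cases β <;>
      norm_num [pTab, evP, evQ, evMon, eta, Matrix.cons_val', Matrix.cons_val_zero,
        Matrix.cons_val_one, Matrix.head_cons, Matrix.empty_val', Matrix.cons_val_fin_one,
        Matrix.head_fin_const, Matrix.vecHead, Matrix.vecTail, Matrix.cons_val_succ]
  · have hdet : eta.det = -1/432 := by
      norm_num [eta, Matrix.det_succ_row_zero, Fin.sum_univ_succ, Matrix.cons_val',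
        Matrix.cons_val_zero, Matrix.cons_val_one, Matrix.head_cons, Matrix.empty_val',
        Matrix.cons_val_fin_one, Matrix.head_fin_const, Matrix.vecHead, Matrix.vecTail,
        Matrix.cons_val_succ, Matrix.cons_val_two, Matrix.cons_val_three]
    rw [hdet]
    norm_num
  · intro α β γ σ x hx
    rw [evP_lhsP x hx, evP_lhsP x hx]
    refine evP_eq_of_sub _ _ ?_ x hx
    fin_cases α <;> fin_cases β <;> fin_cases γ <;> fin_cases σ <;> decide
end

section
/- The rational function F(w¹,w²,w³,w⁴) = w¹((w¹)²/12 + w²w⁴/6 + (w³)²/12) + w³(w⁴)³/648 + (w²)²w³/(2w⁴) − w²(w³)³/(3(w⁴)²) + (w³)⁵/(10(w⁴)³) is quasi-homogeneous of degree 3 with respect to the Euler vector field E = w¹∂₁ + (4/3)w²∂₂ + w³∂₃ + (2/3)w⁴∂₄: at every point with w⁴ ≠ 0, w¹·∂₁F + (4/3)w²·∂₂F + w³·∂₃F + (2/3)w⁴·∂₄F = 3F. -/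
private lemma hasFDerivAt_npow {E : Type*} [NormedAddCommGroup E] [NormedSpace ℝ E]
    {f : E → ℝ} {f' : E →L[ℝ] ℝ} {x : E} (n : ℕ) (h : HasFDerivAt f f' x) :
    HasFDerivAt (fun y => f y ^ n) (((n : ℝ) * f x ^ (n - 1)) • f') x :=
  (hasDerivAt_pow n (f x)).comp_hasFDerivAt x h

private lemma hasFDerivAt_div' {E : Type*} [NormedAddCommGroup E] [NormedSpace ℝ E]
    {f g : E → ℝ} {f' g' : E →L[ℝ] ℝ} {x : E} (hf : HasFDerivAt f f' x)
    (hg : HasFDerivAt g g' x) (h : g x ≠ 0) :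
    HasFDerivAt (fun y => f y / g y) (f x • (-((g x) ^ 2)⁻¹ • g') + (g x)⁻¹ • f') x := by
  simp only [div_eq_mul_inv]
  refine (hf.mul ((hasDerivAt_inv h).comp_hasFDerivAt x hg)).congr_fderiv ?_
  ext v
  simp

private lemma hasFDerivAt_divc {E : Type*} [NormedAddCommGroup E] [NormedSpace ℝ E]
    {f : E → ℝ} {f' : E →L[ℝ] ℝ} {x : E} (hf : HasFDerivAt f f' x) (c : ℝ) :
    HasFDerivAt (fun y => f y / c) (c⁻¹ • f') x := by
  simp only [div_eq_mul_inv]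
  simpa [mul_comm] using hf.const_mul c⁻¹

set_option maxHeartbeats 2000000 in
theorem stmt_11 :
    ∀ x : Fin 4 → ℝ, (_ : x 3 ≠ 0) → 
      1 * x 0 * pd 0 FF x + (4/3) * x 1 * pd 1 FF x + 1 * x 2 * pd 2 FF x + (2/3) * x 3 * pd 3 FF x = 3 * FF x := by
  intro x hx
  have h0 : HasFDerivAt (fun w : Fin 4 → ℝ => w 0) (ContinuousLinearMap.proj (R := ℝ) 0) x :=
    hasFDerivAt_apply 0 x
  have h1 : HasFDerivAt (fun w : Fin 4 → ℝ => w 1) (ContinuousLinearMap.proj (R := ℝ) 1) x :=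
    hasFDerivAt_apply 1 x
  have h2 : HasFDerivAt (fun w : Fin 4 → ℝ => w 2) (ContinuousLinearMap.proj (R := ℝ) 2) x :=
    hasFDerivAt_apply 2 x
  have h3 : HasFDerivAt (fun w : Fin 4 → ℝ => w 3) (ContinuousLinearMap.proj (R := ℝ) 3) x :=
    hasFDerivAt_apply 3 x
  have hd1 : (2 : ℝ) * x 3 ≠ 0 := by positivity
  have hd2 : (3 : ℝ) * (x 3) ^ 2 ≠ 0 := by positivity
  have hd3 : (10 : ℝ) * (x 3) ^ 3 ≠ 0 := by simp [pow_ne_zero, hx]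
  have t1 := h0.mul (((hasFDerivAt_divc (hasFDerivAt_npow 2 h0) 12).add
      (hasFDerivAt_divc (h1.mul h3) 6)).add (hasFDerivAt_divc (hasFDerivAt_npow 2 h2) 12))
  have t2 := hasFDerivAt_divc (h2.mul (hasFDerivAt_npow 3 h3)) 648
  have t3 := hasFDerivAt_div' ((hasFDerivAt_npow 2 h1).mul h2) (h3.const_mul 2) hd1
  have t4 := hasFDerivAt_div' (h1.mul (hasFDerivAt_npow 3 h2)) ((hasFDerivAt_npow 2 h3).const_mul 3) hd2
  have t5 := hasFDerivAt_div' (hasFDerivAt_npow 5 h2) ((hasFDerivAt_npow 3 h3).const_mul 10) hd3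
  have hF : HasFDerivAt FF _ x := (((t1.add t2).add t3).sub t4).add t5
  simp only [pd, hF.fderiv]
  simp only [ContinuousLinearMap.add_apply, ContinuousLinearMap.sub_apply,
    ContinuousLinearMap.coe_smul', Pi.smul_apply, ContinuousLinearMap.neg_apply,
    ContinuousLinearMap.proj_apply, Pi.single_apply, smul_eq_mul, Fin.reduceEq,
    reduceIte]
  show _ = 3 * FF x
  rw [FF]
  norm_num
  field_simp
  ring
end
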